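/- Let n = #S_d(K), let X = {x ∈ ℝ^n : Σ_i d_i|x_i| = 1} with weights d_i > 0, let I(x) = Σ over cliques of the signless 1-Laplacian energy with I(x) ≤ ‖x‖ always, and suppose W_1, …, W_l is a partition of the index set {1,…,n}. Define I^1_W = {x ∈ X : I(x) = 1 and x_i = 0 for all i ∉ W}. Then I^1_{W_1 ∪ W_2} ⊆ I^1_{W_1} * I^1_{W_2} (topological join) for disjoint W_1, W_2, and hence the Krasnoselskii genus satisfies γ(I^1_{{1,…,n}}) ≤ Σ_{i=1}^l γ(I^1_{W_i}). -/

import Mathlib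

/-- Krasnoselskii genus of a symmetric subset of `ℝⁿ`: the least `k` admitting an odd map,
continuous on the set, into the unit sphere of `ℝᵏ` (`⊤` if none exists, `0` for `∅`). -/
noncomputable def genus {n : ℕ} (T : Set (Fin n → ℝ)) : ℕ∞ :=
  sInf {k : ℕ∞ | ∃ m : ℕ, k = (m : ℕ∞) ∧
    ∃ f : (Fin n → ℝ) → EuclideanSpace ℝ (Fin m),
      ContinuousOn f T ∧ (∀ x ∈ T, f (-x) = -f x) ∧ ∀ x ∈ T, ‖f x‖ = 1}

/-- The topological join of two subsets of `ℝⁿ`, realized inside `ℝⁿ`. -/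
def joinSet {n : ℕ} (A B : Set (Fin n → ℝ)) : Set (Fin n → ℝ) :=
  {z | z ∈ A ∨ z ∈ B ∨
    ∃ t ∈ Set.Icc (0 : ℝ) 1, ∃ x ∈ A, ∃ y ∈ B, z = t • x + (1 - t) • y}


namespace Stmt19Aux

variable {n : ℕ}

/-- restriction of a vector to a coordinate set -/
def restr (W : Finset (Fin n)) (x : Fin n → ℝ) : Fin n → ℝ :=
  fun j => if j ∈ W then x j else 0

lemma restr_apply (W : Finset (Fin n)) (x : Fin n → ℝ) (j : Fin n) :
    restr W x j = if j ∈ W then x j else 0 := rfl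

lemma restr_neg (W : Finset (Fin n)) (x : Fin n → ℝ) : restr W (-x) = -restr W x := by
  funext j
  simp only [restr, Pi.neg_apply]
  split <;> simp

lemma continuous_restr (W : Finset (Fin n)) : Continuous (restr W : (Fin n → ℝ) → (Fin n → ℝ)) := by
  refine continuous_pi fun j => ?_
  simp only [restr]
  by_cases h : j ∈ W
  · simpa [h] using (continuous_apply j)
  · simpa [h] using (continuous_const : Continuous fun _ : Fin n → ℝ => (0:ℝ))

/-- the weighted ℓ¹ norm -/
noncomputable def Nd (d : Fin n → ℝ) (x : Fin n → ℝ) : ℝ := ∑ j, d j * |x j|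

lemma Nd_nonneg (d : Fin n → ℝ) (hd : ∀ i, 0 < d i) (x : Fin n → ℝ) : 0 ≤ Nd d x :=
  Finset.sum_nonneg fun j _ => mul_nonneg (hd j).le (abs_nonneg _)

lemma Nd_neg (d : Fin n → ℝ) (x : Fin n → ℝ) : Nd d (-x) = Nd d x := by
  simp [Nd]

lemma Nd_smul (d : Fin n → ℝ) {c : ℝ} (hc : 0 ≤ c) (x : Fin n → ℝ) :
    Nd d (c • x) = c * Nd d x := by
  simp only [Nd, Finset.mul_sum]
  refine Finset.sum_congr rfl fun j _ => ?_
  simp only [Pi.smul_apply, smul_eq_mul, abs_mul, abs_of_nonneg hc]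
  ring

lemma Nd_continuous (d : Fin n → ℝ) : Continuous (Nd d) :=
  continuous_finset_sum _ fun j _ => continuous_const.mul ((continuous_apply j).abs)

lemma Nd_eq_zero (d : Fin n → ℝ) (hd : ∀ i, 0 < d i) {x : Fin n → ℝ} (h : Nd d x = 0) :
    x = 0 := by
  funext j
  have hterm : ∀ k ∈ Finset.univ, (0:ℝ) ≤ d k * |x k| :=
    fun k _ => mul_nonneg (hd k).le (abs_nonneg _)
  have h0 := (Finset.sum_eq_zero_iff_of_nonneg hterm).1 h j (Finset.mem_univ j)
  rcases mul_eq_zero.1 h0 with h1 | h2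
  · exact absurd h1 (hd j).ne'
  · simpa using abs_eq_zero.1 h2

lemma I_zero (I : (Fin n → ℝ) → ℝ)
    (hIh : ∀ t : ℝ, 0 ≤ t → ∀ x, I (t • x) = t * I x) : I 0 = 0 := by
  have := hIh 0 le_rfl 0
  simpa using this

lemma I_add_le (I : (Fin n → ℝ) → ℝ) (hIc : ConvexOn ℝ Set.univ I)
    (hIh : ∀ t : ℝ, 0 ≤ t → ∀ x, I (t • x) = t * I x) (x y : Fin n → ℝ) :
    I (x + y) ≤ I x + I y := by
  have h := hIc.2 (Set.mem_univ x) (Set.mem_univ y)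
    (by norm_num : (0:ℝ) ≤ 1/2) (by norm_num : (0:ℝ) ≤ 1/2) (by norm_num)
  have h2 := hIh 2 (by norm_num) ((1/2 : ℝ) • x + (1/2 : ℝ) • y)
  have h3 : (2:ℝ) • ((1/2 : ℝ) • x + (1/2 : ℝ) • y) = x + y := by
    rw [smul_add, smul_smul, smul_smul]
    norm_num
  rw [h3] at h2
  rw [h2]
  simp only [smul_eq_mul] at h
  linarith

lemma I_sum_le {ι : Type*} (I : (Fin n → ℝ) → ℝ) (hIc : ConvexOn ℝ Set.univ I)
    (hIh : ∀ t : ℝ, 0 ≤ t → ∀ x, I (t • x) = t * I x) (s : Finset ι) (v : ι → Fin n → ℝ) :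
    I (∑ i ∈ s, v i) ≤ ∑ i ∈ s, I (v i) := by
  classical
  induction s using Finset.induction_on with
  | empty => simp [I_zero I hIh]
  | @insert a s ha ih =>
    rw [Finset.sum_insert ha, Finset.sum_insert ha]
    calc I (v a + ∑ i ∈ s, v i) ≤ I (v a) + I (∑ i ∈ s, v i) := I_add_le I hIc hIh _ _
    _ ≤ I (v a) + ∑ i ∈ s, I (v i) := by linarith

lemma eq_pieces (d : Fin n → ℝ) (I : (Fin n → ℝ) → ℝ) (hIc : ConvexOn ℝ Set.univ I)
    (hIh : ∀ t : ℝ, 0 ≤ t → ∀ x, I (t • x) = t * I x)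
    (hIle : ∀ x, I x ≤ ∑ j, d j * |x j|)
    {ι : Type*} [Fintype ι] (v : ι → Fin n → ℝ) (x : Fin n → ℝ)
    (hx : ∑ i, v i = x) (hN : ∑ i, Nd d (v i) = Nd d x)
    (hIx : I x = Nd d x) : ∀ i, I (v i) = Nd d (v i) := by
  have h1 : ∀ i ∈ Finset.univ, I (v i) ≤ Nd d (v i) := fun i _ => hIle (v i)
  have h2 : ∑ i, Nd d (v i) ≤ ∑ i, I (v i) := by
    calc ∑ i, Nd d (v i) = I x := by rw [hN, hIx]
    _ = I (∑ i, v i) := by rw [hx]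
    _ ≤ ∑ i, I (v i) := I_sum_le I hIc hIh _ _
  intro i
  exact (Finset.sum_eq_sum_iff_of_le h1).1
    (le_antisymm (Finset.sum_le_sum h1) h2) i (Finset.mem_univ i)

lemma scaled_mem (d : Fin n → ℝ) (hd : ∀ i, 0 < d i) (I : (Fin n → ℝ) → ℝ)
    (hIh : ∀ t : ℝ, 0 ≤ t → ∀ x, I (t • x) = t * I x)
    (W : Finset (Fin n)) (v : Fin n → ℝ)
    (hsupp : ∀ j ∉ W, v j = 0) (hpos : 0 < Nd d v) (hIv : I v = Nd d v) :
    Nd d ((Nd d v)⁻¹ • v) = 1 ∧ I ((Nd d v)⁻¹ • v) = 1 ∧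
      ∀ j ∉ W, ((Nd d v)⁻¹ • v) j = 0 := by
  refine ⟨?_, ?_, ?_⟩
  · rw [Nd_smul d (inv_nonneg.2 hpos.le), inv_mul_cancel₀ hpos.ne']
  · rw [hIh _ (inv_nonneg.2 hpos.le), hIv, inv_mul_cancel₀ hpos.ne']
  · intro j hj
    simp [hsupp j hj]

/-- the rescaled piece map used in the genus bound -/
noncomputable def pieceMap {msz : ℕ} (d : Fin n → ℝ) (Wi : Finset (Fin n))
    (f : (Fin n → ℝ) → EuclideanSpace ℝ (Fin msz)) (x : Fin n → ℝ) :
    EuclideanSpace ℝ (Fin msz) :=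
  Nd d (restr Wi x) • f ((Nd d (restr Wi x))⁻¹ • restr Wi x)

variable {msz : ℕ} (d : Fin n → ℝ) (Wi : Finset (Fin n))
  (f : (Fin n → ℝ) → EuclideanSpace ℝ (Fin msz)) (S TS : Set (Fin n → ℝ))

lemma pieceMap_norm (hd : ∀ i, 0 < d i)
    (hmap : ∀ x ∈ S, 0 < Nd d (restr Wi x) → (Nd d (restr Wi x))⁻¹ • restr Wi x ∈ TS)
    (hfn : ∀ y ∈ TS, ‖f y‖ = 1) {x : Fin n → ℝ} (hx : x ∈ S) :
    ‖pieceMap d Wi f x‖ = Nd d (restr Wi x) := by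
  rcases eq_or_lt_of_le (Nd_nonneg d hd (restr Wi x)) with h0 | hpos
  · rw [pieceMap, ← h0, zero_smul, norm_zero]
  · rw [pieceMap, norm_smul, Real.norm_eq_abs, abs_of_pos hpos,
      hfn _ (hmap x hx hpos), mul_one]

lemma pieceMap_neg (hd : ∀ i, 0 < d i)
    (hmap : ∀ x ∈ S, 0 < Nd d (restr Wi x) → (Nd d (restr Wi x))⁻¹ • restr Wi x ∈ TS)
    (hfo : ∀ y ∈ TS, f (-y) = -f y) {x : Fin n → ℝ} (hx : x ∈ S) :
    pieceMap d Wi f (-x) = -pieceMap d Wi f x := by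
  have h1 : Nd d (restr Wi (-x)) = Nd d (restr Wi x) := by rw [restr_neg, Nd_neg]
  rcases eq_or_lt_of_le (Nd_nonneg d hd (restr Wi x)) with h0 | hpos
  · rw [pieceMap, pieceMap, h1, ← h0, zero_smul, zero_smul, neg_zero]
  · rw [pieceMap, pieceMap, h1, restr_neg, smul_neg, hfo _ (hmap x hx hpos), smul_neg]

lemma pieceMap_contOn (hd : ∀ i, 0 < d i)
    (hmap : ∀ x ∈ S, 0 < Nd d (restr Wi x) → (Nd d (restr Wi x))⁻¹ • restr Wi x ∈ TS)
    (hfc : ContinuousOn f TS) (hfn : ∀ y ∈ TS, ‖f y‖ = 1) :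
    ContinuousOn (pieceMap d Wi f) S := by
  intro x₀ hx₀
  have hNc : Continuous fun x => Nd d (restr Wi x) :=
    (Nd_continuous d).comp (continuous_restr Wi)
  rcases eq_or_lt_of_le (Nd_nonneg d hd (restr Wi x₀)) with h0 | hpos
  · have h00 : pieceMap d Wi f x₀ = 0 := by rw [pieceMap, ← h0, zero_smul]
    show Filter.Tendsto (pieceMap d Wi f) (nhdsWithin x₀ S) (nhds (pieceMap d Wi f x₀))
    rw [h00]
    apply squeeze_zero_norm' (a := fun x => Nd d (restr Wi x))
    · filter_upwards [eventually_mem_nhdsWithin] with x hx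
      rcases eq_or_lt_of_le (Nd_nonneg d hd (restr Wi x)) with h0' | hp'
      · rw [pieceMap, ← h0', zero_smul, norm_zero]
      · rw [pieceMap, norm_smul, Real.norm_eq_abs, abs_of_pos hp',
          hfn _ (hmap x hx hp'), mul_one]
    · have := (hNc.continuousWithinAt (s := S) (x := x₀))
      rw [ContinuousWithinAt, ← h0] at this
      exact this
  · have hScont : ContinuousWithinAt (fun x => Nd d (restr Wi x)) S x₀ :=
      hNc.continuousWithinAt
    have hO : IsOpen {x : Fin n → ℝ | 0 < Nd d (restr Wi x)} :=
      isOpen_lt continuous_const hNc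
    have hOx : {x : Fin n → ℝ | 0 < Nd d (restr Wi x)} ∈ nhds x₀ := hO.mem_nhds hpos
    rw [← continuousWithinAt_inter hOx]
    have hu : ContinuousWithinAt (fun x => (Nd d (restr Wi x))⁻¹ • restr Wi x)
        (S ∩ {x | 0 < Nd d (restr Wi x)}) x₀ := by
      exact ((hScont.mono Set.inter_subset_left).inv₀ hpos.ne').smul
        ((continuous_restr Wi).continuousWithinAt)
    have hmap2 : Set.MapsTo (fun x => (Nd d (restr Wi x))⁻¹ • restr Wi x)
        (S ∩ {x | 0 < Nd d (restr Wi x)}) TS := fun x hx => hmap x hx.1 hx.2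
    have hfu : ContinuousWithinAt (fun x => f ((Nd d (restr Wi x))⁻¹ • restr Wi x))
        (S ∩ {x | 0 < Nd d (restr Wi x)}) x₀ :=
      ContinuousWithinAt.comp (g := f)
        (f := fun x => (Nd d (restr Wi x))⁻¹ • restr Wi x)
        (hfc _ (hmap x₀ hx₀ hpos)) hu hmap2
    exact (hScont.mono Set.inter_subset_left).smul hfu

end Stmt19Aux

open Stmt19Aux

/-- For a convex, even, one-homogeneous `I` with `I ≤ ‖·‖₁,d`, the level sets
`I¹_W = {x : ‖x‖ = 1, I x = 1, supp x ⊆ W}` satisfy `I¹_{W₁∪W₂} ⊆ I¹_{W₁} * I¹_{W₂}` for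
disjoint `W₁, W₂`, and the Krasnoselskii genus is subadditive over a partition:
`γ(I¹) ≤ Σᵢ γ(I¹_{Wᵢ})`. -/
theorem stmt19 {n : ℕ} (d : Fin n → ℝ) (hd : ∀ i, 0 < d i)
    (I : (Fin n → ℝ) → ℝ) (hIc : ConvexOn ℝ Set.univ I)
    (hIe : ∀ x, I (-x) = I x)
    (hIh : ∀ t : ℝ, 0 ≤ t → ∀ x, I (t • x) = t * I x)
    (hIle : ∀ x, I x ≤ ∑ j, d j * |x j|)
    (l : ℕ) (W : Fin l → Finset (Fin n))
    (hdisj : ∀ i j, i ≠ j → Disjoint (W i) (W j))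
    (hcover : ∀ k : Fin n, ∃ i, k ∈ W i) :
    (∀ W₁ W₂ : Finset (Fin n), Disjoint W₁ W₂ →
      {x : Fin n → ℝ | (∑ j, d j * |x j|) = 1 ∧ I x = 1 ∧ ∀ j ∉ W₁ ∪ W₂, x j = 0} ⊆
        joinSet
          {x : Fin n → ℝ | (∑ j, d j * |x j|) = 1 ∧ I x = 1 ∧ ∀ j ∉ W₁, x j = 0}
          {x : Fin n → ℝ | (∑ j, d j * |x j|) = 1 ∧ I x = 1 ∧ ∀ j ∉ W₂, x j = 0}) ∧
    genus {x : Fin n → ℝ | (∑ j, d j * |x j|) = 1 ∧ I x = 1} ≤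
      ∑ i : Fin l,
        genus {x : Fin n → ℝ | (∑ j, d j * |x j|) = 1 ∧ I x = 1 ∧ ∀ k ∉ W i, x k = 0} := by
  classical
  constructor
  · -- join part
    intro W₁ W₂ hW12 x hx
    obtain ⟨hN1, hI1, hsupp⟩ := hx
    have hN1' : Nd d x = 1 := hN1
    have hxab : restr W₁ x + restr W₂ x = x := by
      funext j
      by_cases h1 : j ∈ W₁
      · have h2 : j ∉ W₂ := fun h2 => (Finset.disjoint_left.1 hW12) h1 h2
        simp [restr_apply, h1, h2]
      · by_cases h2 : j ∈ W₂
        · simp [restr_apply, h1, h2]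
        · have h3 := hsupp j (by simp [Finset.mem_union, h1, h2])
          simp [restr_apply, h1, h2, h3]
    have hNab : Nd d (restr W₁ x) + Nd d (restr W₂ x) = Nd d x := by
      unfold Nd
      rw [← Finset.sum_add_distrib]
      refine Finset.sum_congr rfl fun j _ => ?_
      by_cases h1 : j ∈ W₁
      · have h2 : j ∉ W₂ := fun h2 => (Finset.disjoint_left.1 hW12) h1 h2
        simp [restr_apply, h1, h2]
      · by_cases h2 : j ∈ W₂
        · simp [restr_apply, h1, h2]
        · have h3 := hsupp j (by simp [Finset.mem_union, h1, h2])
          simp [restr_apply, h1, h2, h3]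
    rw [hN1'] at hNab
    have hIa : I (restr W₁ x) = Nd d (restr W₁ x) ∧ I (restr W₂ x) = Nd d (restr W₂ x) := by
      have h1 : I (restr W₁ x) ≤ Nd d (restr W₁ x) := hIle _
      have h2 : I (restr W₂ x) ≤ Nd d (restr W₂ x) := hIle _
      have h3 : I x ≤ I (restr W₁ x) + I (restr W₂ x) := by
        conv_lhs => rw [← hxab]
        exact I_add_le I hIc hIh _ _
      rw [hI1] at h3
      constructor <;> linarith
    rcases eq_or_lt_of_le (Nd_nonneg d hd (restr W₂ x)) with h0b | hpb
    · -- second piece vanishes, x lies in the first set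
      have hb0 : restr W₂ x = 0 := Nd_eq_zero d hd h0b.symm
      left
      refine ⟨hN1, hI1, fun j hj => ?_⟩
      have hxj : x j = restr W₁ x j + restr W₂ x j := (congrFun hxab j).symm
      rw [hxj, restr_apply, if_neg hj, hb0]
      simp
    rcases eq_or_lt_of_le (Nd_nonneg d hd (restr W₁ x)) with h0a | hpa
    · -- first piece vanishes, x lies in the second set
      have ha0 : restr W₁ x = 0 := Nd_eq_zero d hd h0a.symm
      right; left
      refine ⟨hN1, hI1, fun j hj => ?_⟩
      have hxj : x j = restr W₁ x j + restr W₂ x j := (congrFun hxab j).symm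
      rw [hxj, restr_apply (W := W₂), if_neg hj, ha0]
      simp
    · -- genuine join point
      right; right
      obtain ⟨ma1, ma2, ma3⟩ := scaled_mem d hd I hIh W₁ (restr W₁ x)
        (fun j hj => if_neg hj) hpa hIa.1
      obtain ⟨mb1, mb2, mb3⟩ := scaled_mem d hd I hIh W₂ (restr W₂ x)
        (fun j hj => if_neg hj) hpb hIa.2
      refine ⟨Nd d (restr W₁ x), ⟨Nd_nonneg d hd _, by linarith⟩,
        (Nd d (restr W₁ x))⁻¹ • restr W₁ x, ⟨ma1, ma2, ma3⟩,
        (Nd d (restr W₂ x))⁻¹ • restr W₂ x, ⟨mb1, mb2, mb3⟩, ?_⟩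
      have h1t : (1 : ℝ) - Nd d (restr W₁ x) = Nd d (restr W₂ x) := by linarith
      rw [h1t, smul_smul, smul_smul, mul_inv_cancel₀ hpa.ne', mul_inv_cancel₀ hpb.ne',
        one_smul, one_smul]
      exact hxab.symm
  · -- genus part
    have huniq : ∀ j : Fin n, ∃! i, j ∈ W i := by
      intro j
      obtain ⟨i, hi⟩ := hcover j
      refine ⟨i, hi, fun i' hi' => ?_⟩
      by_contra hne
      exact (Finset.disjoint_left.1 (hdisj i' i hne)) hi' hi
    have hsum_restr : ∀ x : Fin n → ℝ, ∑ i, restr (W i) x = x := by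
      intro x; funext j
      rw [Finset.sum_apply]
      obtain ⟨i₀, hi₀, hun⟩ := huniq j
      rw [Finset.sum_eq_single i₀]
      · rw [restr_apply, if_pos hi₀]
      · intro i _ hne
        rw [restr_apply, if_neg fun hji => hne (hun i hji)]
      · intro h; exact absurd (Finset.mem_univ i₀) h
    have hNsum : ∀ x : Fin n → ℝ, ∑ i, Nd d (restr (W i) x) = Nd d x := by
      intro x
      unfold Nd
      rw [Finset.sum_comm]
      refine Finset.sum_congr rfl fun j _ => ?_
      obtain ⟨i₀, hi₀, hun⟩ := huniq j
      rw [Finset.sum_eq_single i₀]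
      · rw [restr_apply, if_pos hi₀]
      · intro i _ hne
        rw [restr_apply, if_neg fun hji => hne (hun i hji), abs_zero, mul_zero]
      · intro h; exact absurd (Finset.mem_univ i₀) h
    let T : Set (Fin n → ℝ) := {x | (∑ j, d j * |x j|) = 1 ∧ I x = 1}
    let Ti : Fin l → Set (Fin n → ℝ) :=
      fun i => {x | (∑ j, d j * |x j|) = 1 ∧ I x = 1 ∧ ∀ k ∉ W i, x k = 0}
    have hmemTi : ∀ i : Fin l, ∀ x ∈ T, 0 < Nd d (restr (W i) x) →
        (Nd d (restr (W i) x))⁻¹ • restr (W i) x ∈ Ti i := by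
      intro i x hx hpos
      have hIx : I x = Nd d x := by
        rw [hx.2]; exact hx.1.symm
      have hpieces := eq_pieces d I hIc hIh hIle (fun i => restr (W i) x) x
        (hsum_restr x) (hNsum x) hIx i
      obtain ⟨m1, m2, m3⟩ := scaled_mem d hd I hIh (W i) (restr (W i) x)
        (fun j hj => if_neg hj) hpos hpieces
      exact ⟨m1, m2, m3⟩
    by_cases htop : ∀ i : Fin l, genus (Ti i) ≠ ⊤
    case neg =>
      push_neg at htop
      obtain ⟨i, hi⟩ := htop
      refine le_trans le_top ?_
      rw [← hi]
      exact Finset.single_le_sum (f := fun j => genus (Ti j)) (fun j _ => zero_le)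
        (Finset.mem_univ i)
    case pos =>
      have hwit : ∀ i : Fin l, ∃ m : ℕ, (m : ℕ∞) ≤ genus (Ti i) ∧
          ∃ f : (Fin n → ℝ) → EuclideanSpace ℝ (Fin m),
            ContinuousOn f (Ti i) ∧ (∀ x ∈ Ti i, f (-x) = -f x) ∧ ∀ x ∈ Ti i, ‖f x‖ = 1 := by
        intro i
        have hne := htop i
        have hlt : genus (Ti i) < genus (Ti i) + 1 := (ENat.lt_add_one_iff hne).2 le_rfl
        unfold genus at hlt
        obtain ⟨k, hk, hklt⟩ := sInf_lt_iff.1 hlt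
        obtain ⟨mm, rfl, ff, hf1, hf2, hf3⟩ := hk
        exact ⟨mm, (ENat.lt_add_one_iff hne).1 hklt, ff, hf1, hf2, hf3⟩
      choose m hm f hfc hfo hfn using hwit
      let g : (Fin n → ℝ) → EuclideanSpace ℝ ((i : Fin l) × Fin (m i)) :=
        fun x => WithLp.toLp 2 (fun p : (i : Fin l) × Fin (m i) => pieceMap d (W p.1) (f p.1) x p.2)
      have hgc : ContinuousOn g T := by
        have hG : ContinuousOn (fun x (p : (i : Fin l) × Fin (m i)) =>
            pieceMap d (W p.1) (f p.1) x p.2) T := by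
          rw [continuousOn_pi]
          intro p
          have h1 : ContinuousOn (pieceMap d (W p.1) (f p.1)) T :=
            pieceMap_contOn d (W p.1) (f p.1) T (Ti p.1) hd (hmemTi p.1) (hfc p.1) (hfn p.1)
          exact ((continuous_apply p.2).comp (PiLp.continuous_ofLp 2 _)).comp_continuousOn h1
        exact (PiLp.continuous_toLp 2 _).comp_continuousOn hG
      have hex : ∀ x ∈ T, ∃ i, 0 < Nd d (restr (W i) x) := by
        intro x hx
        by_contra hcon
        push_neg at hcon
        have hz : ∀ i ∈ Finset.univ, Nd d (restr (W i) x) = 0 :=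
          fun i _ => le_antisymm (hcon i) (Nd_nonneg d hd _)
        have h0 := Finset.sum_eq_zero hz
        rw [hNsum x] at h0
        have h1 : Nd d x = 1 := hx.1
        rw [h1] at h0
        exact one_ne_zero h0
      have hgne : ∀ x ∈ T, g x ≠ 0 := by
        intro x hx hg0
        obtain ⟨i, hi⟩ := hex x hx
        have hz : pieceMap d (W i) (f i) x = 0 := by
          ext j
          exact congrFun (congrArg WithLp.ofLp hg0) ⟨i, j⟩
        have hnm := pieceMap_norm d (W i) (f i) T (Ti i) hd (hmemTi i) (hfn i) hx
        rw [hz, norm_zero] at hnm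
        exact hi.ne hnm
      have hgneg : ∀ x ∈ T, g (-x) = -g x := by
        intro x hx
        ext p
        have h1 := pieceMap_neg d (W p.1) (f p.1) T (Ti p.1) hd (hmemTi p.1) (hfo p.1) hx
        calc g (-x) p = pieceMap d (W p.1) (f p.1) (-x) p.2 := rfl
          _ = (-pieceMap d (W p.1) (f p.1) x) p.2 := by rw [h1]
          _ = (-g x) p := rfl
      let e := (LinearIsometryEquiv.piLpCongrLeft 2 ℝ ℝ
        (Fintype.equivFinOfCardEq
          (by simp : Fintype.card ((i : Fin l) × Fin (m i)) = ∑ i, m i)))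
      have hgen : genus T ≤ ((∑ i, m i : ℕ) : ℕ∞) := by
        apply sInf_le
        refine ⟨∑ i, m i, rfl, fun x => e ((‖g x‖)⁻¹ • g x), ?_, ?_, ?_⟩
        · apply e.continuous.comp_continuousOn
          exact (hgc.norm.inv₀ fun x hx => norm_ne_zero_iff.2 (hgne x hx)).smul hgc
        · intro x hx
          show e (‖g (-x)‖⁻¹ • g (-x)) = -e (‖g x‖⁻¹ • g x)
          rw [hgneg x hx, norm_neg, smul_neg, map_neg]
        · intro x hx
          show ‖e (‖g x‖⁻¹ • g x)‖ = 1
          rw [e.norm_map, norm_smul, norm_inv, norm_norm,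
            inv_mul_cancel₀ (norm_ne_zero_iff.2 (hgne x hx))]
      calc genus T ≤ ((∑ i, m i : ℕ) : ℕ∞) := hgen
        _ = ∑ i, ((m i : ℕ) : ℕ∞) := by rw [Nat.cast_sum]
        _ ≤ ∑ i, genus (Ti i) := Finset.sum_le_sum fun i _ => hm i
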